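/- For every n ≥ 1, the element d^{2^n} fixes every word of length 2 and its sections at the level-2 vertices are d^{2^n}|_{00} = 1, d^{2^n}|_{01} = 1, d^{2^n}|_{10} = a^{2^n}, d^{2^n}|_{11} = c^{2^n}; and the element a^{2^n} fixes every word of length 1 and satisfies a^{2^n}|_0 = a^{2^n}|_1 = d^{2^{n-1}}. -/
import Mathlib


namespace BVTree

/-- States of the automaton (generators, their inverses, and the identity). -/
inductive Q : Type
  | e | qa | qb | qc | qd | qa' | qb' | qc' | qd'
  deriving DecidableEq

open Q

/-- Output function of the automaton. -/
def Qout : Q → Bool → Bool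
  | qa, x => !x
  | qa', x => !x
  | _, x => x

/-- Transition function of the automaton. -/
def Qtrans : Q → Bool → Q
  | qa, false => qd
  | qa, true => e
  | qb, false => qa
  | qb, true => qc
  | qc, _ => qa
  | qd, false => e
  | qd, true => qb
  | qa', false => e
  | qa', true => qd'
  | qb', false => qa'
  | qb', true => qc'
  | qc', _ => qa'
  | qd', false => e
  | qd', true => qb'
  | e, _ => e

/-- The state corresponding to the inverse automorphism. -/
def Qinv : Q → Q
  | e => e
  | qa => qa' | qb => qb' | qc => qc' | qd => qd'
  | qa' => qa | qb' => qb | qc' => qc | qd' => qd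

/-- The action of a state on finite binary words. -/
def act : Q → List Bool → List Bool
  | _, [] => []
  | q, x :: w => Qout q x :: act (Qtrans q x) w

lemma act_inv (q : Q) : ∀ w, act (Qinv q) (act q w) = w := by
  intro w
  induction w generalizing q with
  | nil => rfl
  | cons x w ih =>
    have h1 : Qout (Qinv q) (Qout q x) = x := by cases q <;> cases x <;> rfl
    have h2 : Qtrans (Qinv q) (Qout q x) = Qinv (Qtrans q x) := by
      cases q <;> cases x <;> rfl
    simp [act, h1, h2, ih]

/-- The tree automorphism determined by a state of the automaton. -/
def aut (q : Q) : Equiv.Perm (List Bool) where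
  toFun := act q
  invFun := act (Qinv q)
  left_inv := act_inv q
  right_inv := by
    intro w
    have h : Qinv (Qinv q) = q := by cases q <;> rfl
    simpa [h] using act_inv (Qinv q) w

/-- The automorphism `a`: `a(0w) = 1·d(w)`, `a(1w) = 0·w`. -/
def a : Equiv.Perm (List Bool) := aut qa
/-- The automorphism `b`: `b(0w) = 0·a(w)`, `b(1w) = 1·c(w)`. -/
def b : Equiv.Perm (List Bool) := aut qb
/-- The automorphism `c`: `c(0w) = 0·a(w)`, `c(1w) = 1·a(w)`. -/
def c : Equiv.Perm (List Bool) := aut qc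
/-- The automorphism `d`: `d(0w) = 0·w`, `d(1w) = 1·b(w)`. -/
def d : Equiv.Perm (List Bool) := aut qd

/-- The group `G` generated by `a`, `b`, `c`, `d`. -/
def G : Subgroup (Equiv.Perm (List Bool)) := Subgroup.closure {a, b, c, d}


lemma act_e (w : List Bool) : act e w = w := by
  induction w with
  | nil => rfl
  | cons x w ih => simp [act, Qout, Qtrans, ih]

lemma a_false (w : List Bool) : a (false :: w) = true :: d w := rfl
lemma a_true (w : List Bool) : a (true :: w) = false :: w := by
  show false :: act e w = _; rw [act_e]
lemma b_false (w : List Bool) : b (false :: w) = false :: a w := rfl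
lemma b_true (w : List Bool) : b (true :: w) = true :: c w := rfl
lemma c_cons (x : Bool) (w : List Bool) : c (x :: w) = x :: a w := by cases x <;> rfl
lemma d_false (w : List Bool) : d (false :: w) = false :: w := by
  show false :: act e w = _; rw [act_e]
lemma d_true (w : List Bool) : d (true :: w) = true :: b w := rfl

lemma pow_apply_succ (f : Equiv.Perm (List Bool)) (k : ℕ) (w : List Bool) :
    (f ^ (k + 1)) w = (f ^ k) (f w) := by
  rw [pow_succ]; rfl

lemma pow_nil (f : Equiv.Perm (List Bool)) (hf : f [] = []) (k : ℕ) :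
    (f ^ k) [] = [] := by
  induction k with
  | zero => simp
  | succ k ih => rw [pow_apply_succ, hf, ih]

lemma a_nil : a [] = [] := rfl
lemma c_nil : c [] = [] := rfl
lemma d_nil : d [] = [] := rfl

lemma d_pow_false (k : ℕ) (w : List Bool) : (d ^ k) (false :: w) = false :: w := by
  induction k with
  | zero => simp
  | succ k ih => rw [pow_apply_succ, d_false, ih]

lemma d_pow_true (k : ℕ) (w : List Bool) : (d ^ k) (true :: w) = true :: (b ^ k) w := by
  induction k generalizing w with
  | zero => simp
  | succ k ih => rw [pow_apply_succ, d_true, ih, pow_apply_succ]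

lemma b_pow_false (k : ℕ) (w : List Bool) : (b ^ k) (false :: w) = false :: (a ^ k) w := by
  induction k generalizing w with
  | zero => simp
  | succ k ih => rw [pow_apply_succ, b_false, ih, pow_apply_succ]

lemma b_pow_true (k : ℕ) (w : List Bool) : (b ^ k) (true :: w) = true :: (c ^ k) w := by
  induction k generalizing w with
  | zero => simp
  | succ k ih => rw [pow_apply_succ, b_true, ih, pow_apply_succ]

lemma a_sq (x : Bool) (w : List Bool) : (a ^ 2) (x :: w) = x :: d w := by
  have h : (a ^ 2) (x :: w) = a (a (x :: w)) := by rw [pow_succ, pow_one]; rfl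
  cases x <;> simp [h, a_false, a_true]

lemma a_pow_even (k : ℕ) (x : Bool) (w : List Bool) :
    (a ^ (2 * k)) (x :: w) = x :: (d ^ k) w := by
  induction k generalizing w with
  | zero => simp
  | succ k ih =>
    have h : 2 * (k + 1) = 2 * k + 2 := by ring
    have h2 : (a ^ (2 * k + 2)) (x :: w) = (a ^ (2 * k)) ((a ^ 2) (x :: w)) := by
      rw [pow_add]; rfl
    rw [h, h2, a_sq, ih, pow_apply_succ]

/-- for `n ≥ 1`, the level-2 sections of `d^{2^n}` are `1, 1, a^{2^n}, c^{2^n}`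
and the level-1 sections of `a^{2^n}` are both `d^{2^{n-1}}`. -/
theorem pow_sections (n : ℕ) (hn : 1 ≤ n) :
    (∀ v : List Bool, v.length = 2 → (d ^ (2 ^ n)) v = v) ∧
    (∀ w : List Bool, (d ^ (2 ^ n)) ([false, false] ++ w) = [false, false] ++ w) ∧
    (∀ w : List Bool, (d ^ (2 ^ n)) ([false, true] ++ w) = [false, true] ++ w) ∧
    (∀ w : List Bool,
      (d ^ (2 ^ n)) ([true, false] ++ w) = [true, false] ++ (a ^ (2 ^ n)) w) ∧
    (∀ w : List Bool,
      (d ^ (2 ^ n)) ([true, true] ++ w) = [true, true] ++ (c ^ (2 ^ n)) w) ∧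
    (∀ v : List Bool, v.length = 1 → (a ^ (2 ^ n)) v = v) ∧
    (∀ w : List Bool,
      (a ^ (2 ^ n)) ([false] ++ w) = [false] ++ (d ^ (2 ^ (n - 1))) w) ∧
    (∀ w : List Bool,
      (a ^ (2 ^ n)) ([true] ++ w) = [true] ++ (d ^ (2 ^ (n - 1))) w) := by
  have hsplit : 2 ^ n = 2 * 2 ^ (n - 1) := by
    rw [← pow_succ']
    congr 1
    omega
  refine ⟨?_, ?_, ?_, ?_, ?_, ?_, ?_, ?_⟩
  · intro v hv
    obtain ⟨x, y, rfl⟩ := List.length_eq_two.mp hv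
    cases x
    · exact d_pow_false _ _
    · rw [d_pow_true]
      cases y
      · rw [b_pow_false, pow_nil a a_nil]
      · rw [b_pow_true, pow_nil c c_nil]
  · intro w; exact d_pow_false _ _
  · intro w; exact d_pow_false _ _
  · intro w; rw [List.cons_append, d_pow_true, List.singleton_append, b_pow_false]; rfl
  · intro w; rw [List.cons_append, d_pow_true, List.singleton_append, b_pow_true]; rfl
  · intro v hv
    obtain ⟨x, rfl⟩ := List.length_eq_one_iff.mp hv
    rw [hsplit, a_pow_even, pow_nil d d_nil]
  · intro w; rw [hsplit]; exact a_pow_even _ _ _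
  · intro w; rw [hsplit]; exact a_pow_even _ _ _

end BVTree
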